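/- The set of coefficient vectors (a₀, …, a_{n-1}) ∈ ℝⁿ for which the monic polynomial λⁿ + a_{n-1}λ^{n-1} + ⋯ + a₀ has all roots in the open unit disk is an open and bounded subset of ℝⁿ. -/

import Mathlib

open Polynomial

lemma heval (n : ℕ) (a : Fin n → ℝ) (z : ℂ) :
    aeval z (X ^ n + ∑ i : Fin n, C (a i) * X ^ (i : ℕ) : ℝ[X]) =
      z ^ n + ∑ i : Fin n, (a i : ℂ) * z ^ (i : ℕ) := by
  simp [Complex.coe_algebraMap]

lemma hdeglt (n : ℕ) (a : Fin n → ℝ) :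
    (∑ i : Fin n, C (a i) * X ^ (i : ℕ) : ℝ[X]).degree < (X ^ n : ℝ[X]).degree := by
  rw [degree_X_pow]
  refine lt_of_le_of_lt (degree_sum_le _ _) ?_
  rw [Finset.sup_lt_iff (by exact_mod_cast WithBot.bot_lt_coe n)]
  intro i _
  refine lt_of_le_of_lt (degree_C_mul_X_pow_le _ _) ?_
  exact_mod_cast i.isLt

lemma hmonic (n : ℕ) (a : Fin n → ℝ) :
    (X ^ n + ∑ i : Fin n, C (a i) * X ^ (i : ℕ) : ℝ[X]).Monic :=
  (monic_X_pow n).add_of_left (hdeglt n a)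

lemma hnatdeg (n : ℕ) (a : Fin n → ℝ) :
    (X ^ n + ∑ i : Fin n, C (a i) * X ^ (i : ℕ) : ℝ[X]).natDegree = n := by
  rw [natDegree_add_eq_left_of_degree_lt (hdeglt n a), natDegree_X_pow]

lemma hcoeff (n : ℕ) (a : Fin n → ℝ) (i : Fin n) :
    (X ^ n + ∑ i : Fin n, C (a i) * X ^ (i : ℕ) : ℝ[X]).coeff i = a i := by
  rw [coeff_add, coeff_X_pow, if_neg (Nat.ne_of_lt i.isLt), zero_add, finset_sum_coeff]
  simp only [coeff_C_mul, coeff_X_pow]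
  rw [Finset.sum_eq_single i] <;> simp +contextual [Fin.val_eq_val, eq_comm]

lemma hbound (n : ℕ) (a : Fin n → ℝ)
    (ha : ∀ z : ℂ, aeval z (X ^ n + ∑ i : Fin n, C (a i) * X ^ (i : ℕ) : ℝ[X]) = 0 →
      ‖z‖ < 1) (i : Fin n) :
    |a i| ≤ (n.choose (n / 2) : ℝ) := by
  set p : ℝ[X] := X ^ n + ∑ i : Fin n, C (a i) * X ^ (i : ℕ) with hp
  have hs : Splits (p.map (algebraMap ℝ ℂ)) := IsAlgClosed.splits _
  have hroots : ∀ z ∈ (p.map (algebraMap ℝ ℂ)).roots, ‖z‖ ≤ 1 := by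
    intro z hz
    have : aeval z p = 0 := by
      rw [aeval_def, ← eval_map]
      exact (mem_roots'.mp hz).2
    exact le_of_lt (ha z this)
  have := coeff_bdd_of_roots_le (algebraMap ℝ ℂ) (hmonic n a) hs
    (le_of_eq (hnatdeg n a)) hroots i
  rw [coeff_map, hcoeff n a i] at this
  simpa using this

lemma hopen (n : ℕ) (hn : 0 < n) :
    IsOpen {a : Fin n → ℝ |
      ∀ z : ℂ, aeval z (X ^ n + ∑ i : Fin n, C (a i) * X ^ (i : ℕ) : ℝ[X]) = 0 →
        ‖z‖ < 1} := by
  rw [isOpen_iff_mem_nhds]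
  intro a ha
  set f : (Fin n → ℝ) × ℂ → ℂ :=
    fun q => q.2 ^ n + ∑ i : Fin n, (q.1 i : ℂ) * q.2 ^ (i : ℕ) with hfdef
  have hf : Continuous f := by
    refine (continuous_snd.pow n).add (continuous_finset_sum _ fun i _ => ?_)
    exact (Complex.continuous_ofReal.comp ((continuous_apply i).comp continuous_fst)).mul
      (continuous_snd.pow i)
  set M : ℝ := (∑ i, |a i|) + n + 2 with hMdef
  have hsum0 : (0:ℝ) ≤ ∑ i, |a i| := Finset.sum_nonneg fun i _ => abs_nonneg _
  have hM1 : (1:ℝ) ≤ M := by have : (0:ℝ) ≤ (n:ℝ) := Nat.cast_nonneg n; linarith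
  set K : Set ℂ := Metric.closedBall 0 M \ Metric.ball 0 1 with hKdef
  have hK : IsCompact K := (isCompact_closedBall 0 M).diff Metric.isOpen_ball
  have hU : IsOpen {q : (Fin n → ℝ) × ℂ | f q ≠ 0} :=
    isOpen_compl_singleton.preimage hf
  have hsub : ({a} ×ˢ K : Set ((Fin n → ℝ) × ℂ)) ⊆ {q | f q ≠ 0} := by
    rintro ⟨b, z⟩ ⟨hb, hzK, hz1⟩ h0
    simp only [Set.mem_singleton_iff] at hb
    subst hb
    refine hz1 (Metric.mem_ball.mpr ?_)
    rw [Complex.dist_eq, sub_zero]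
    exact ha z (by rw [heval]; exact h0)
  obtain ⟨V, W, hVopen, -, haV, hKW, hVW⟩ :=
    generalized_tube_lemma isCompact_singleton hK hU hsub
  have hmem : V ∩ Metric.ball a 1 ∈ nhds a :=
    Filter.inter_mem (hVopen.mem_nhds (haV rfl)) (Metric.ball_mem_nhds a one_pos)
  refine Filter.mem_of_superset hmem ?_
  rintro b ⟨hbV, hbB⟩ z hz
  rw [heval] at hz
  by_contra hz1
  push_neg at hz1
  set r : ℝ := ‖z‖ with hrdef
  rcases le_or_gt r M with hzM | hzM
  · refine hVW (Set.mk_mem_prod hbV (hKW ?_)) hz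
    constructor
    · rw [Metric.mem_closedBall, Complex.dist_eq, sub_zero]; exact hzM
    · rw [Metric.mem_ball, Complex.dist_eq, sub_zero]; exact not_lt.mpr hz1
  · have hb1 : ∀ i, |b i| ≤ |a i| + 1 := by
      intro i
      have h1 : dist (b i) (a i) ≤ dist b a := dist_le_pi_dist b a i
      have h2 : dist b a < 1 := Metric.mem_ball.mp hbB
      have := (abs_sub_abs_le_abs_sub (b i) (a i)).trans (le_of_lt (h1.trans_lt h2))
      linarith
    have hr1 : (1:ℝ) ≤ r := hM1.trans hzM.le
    have hrpos : (0:ℝ) < r ^ (n - 1) := pow_pos (lt_of_lt_of_le one_pos hr1) _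
    have hzn : (z : ℂ) ^ n = -(∑ i : Fin n, ((b i : ℂ)) * z ^ (i : ℕ)) := by
      linear_combination hz
    have habs : r ^ n = ‖(∑ i : Fin n, ((b i : ℂ)) * z ^ (i : ℕ))‖ := by
      rw [← norm_pow, hzn, norm_neg]
    have hbound2 : ‖(∑ i : Fin n, ((b i : ℂ)) * z ^ (i : ℕ))‖ ≤
        ((∑ i, |a i|) + n) * r ^ (n - 1) := by
      refine (norm_sum_le _ _).trans ?_
      have : ∀ i : Fin n, ‖(b i : ℂ) * z ^ (i : ℕ)‖ ≤ (|a i| + 1) * r ^ (n - 1) := by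
        intro i
        rw [norm_mul, norm_pow, Complex.norm_real, Real.norm_eq_abs]
        refine mul_le_mul (hb1 i) (pow_le_pow_right₀ hr1 (Nat.le_pred_of_lt i.isLt))
          (pow_nonneg (by linarith) _) (by positivity)
      refine (Finset.sum_le_sum fun i _ => this i).trans ?_
      rw [← Finset.sum_mul, Finset.sum_add_distrib, Finset.sum_const, Finset.card_univ,
        Fintype.card_fin, nsmul_eq_mul, mul_one]
    have hfin : ((∑ i, |a i|) + n) * r ^ (n - 1) < r ^ n := by
      have h3 : (∑ i, |a i|) + (n:ℝ) < r := by
        have : (∑ i, |a i|) + (n:ℝ) < M := by rw [hMdef]; linarith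
        linarith
      calc ((∑ i, |a i|) + n) * r ^ (n - 1) < r * r ^ (n - 1) :=
            mul_lt_mul_of_pos_right h3 hrpos
        _ = r ^ n := by rw [← pow_succ', Nat.sub_add_cancel hn]
    rw [habs] at hfin
    exact absurd hbound2 (not_le.mpr hfin)

/-- The set of coefficient vectors in `ℝⁿ` whose monic polynomial
`λⁿ + a_{n-1}λ^{n-1} + ⋯ + a₀` has all roots in the open unit disk is open and
bounded. -/
theorem schur_coeff_set_isOpen_isBounded (n : ℕ) :
    IsOpen {a : Fin n → ℝ |
      ∀ z : ℂ, aeval z (X ^ n + ∑ i : Fin n, C (a i) * X ^ (i : ℕ) : ℝ[X]) = 0 →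
        ‖z‖ < 1} ∧
    Bornology.IsBounded {a : Fin n → ℝ |
      ∀ z : ℂ, aeval z (X ^ n + ∑ i : Fin n, C (a i) * X ^ (i : ℕ) : ℝ[X]) = 0 →
        ‖z‖ < 1} := by
  constructor
  · rcases Nat.eq_zero_or_pos n with rfl | hn
    · convert isOpen_univ
      ext a
      simp
    · exact hopen n hn
  · refine (Metric.isBounded_closedBall (x := (0 : Fin n → ℝ))
      (r := (n.choose (n / 2) : ℝ))).subset ?_
    intro a ha
    rw [Metric.mem_closedBall, dist_zero_right]
    rw [pi_norm_le_iff_of_nonneg (by positivity)]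
    intro i
    rw [Real.norm_eq_abs]
    exact hbound n a ha i
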